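/- Let C be a longest cycle in a finite graph G and let P be a C-path with endpoints u and v. Then each of the two arcs of C between u and v contains at least as many internal vertices as P does. -/

import Mathlib

open SimpleGraph Walk
open Fin.NatCast

section Aux
variable {V : Type*} {G : SimpleGraph V} {n : ℕ} [NeZero n] {c : Fin n → V}

def arcWalk (hadj : ∀ r : Fin n, G.Adj (c r) (c (r+1))) (a : Fin n) :
    (k : ℕ) → G.Walk (c a) (c (a + (k : Fin n)))
  | 0 => Walk.nil.copy rfl (by simp)
  | (k+1) => ((arcWalk hadj a k).concat (hadj (a + (k : Fin n)))).copy rfl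
      (by rw [Nat.cast_add, Nat.cast_one, add_assoc])

lemma arcWalk_length (hadj : ∀ r : Fin n, G.Adj (c r) (c (r+1))) (a : Fin n) (k : ℕ) :
    (arcWalk hadj a k).length = k := by
  induction k with
  | zero => simp [arcWalk]
  | succ k ih => simp [arcWalk, Walk.length_copy, Walk.length_concat, ih]

lemma arcWalk_support (hadj : ∀ r : Fin n, G.Adj (c r) (c (r+1))) (a : Fin n) (k : ℕ) :
    (arcWalk hadj a k).support = (List.range (k+1)).map (fun i : ℕ => c (a + (i : Fin n))) := by
  induction k with
  | zero =>
    rw [show List.range 1 = [0] from rfl]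
    simp [arcWalk]
  | succ k ih =>
    simp only [arcWalk, Walk.support_copy, Walk.support_concat, ih, List.range_succ,
      List.map_append, List.concat_eq_append, List.map_cons, List.map_nil]
    rw [Nat.cast_add, Nat.cast_one, add_assoc]

lemma arcWalk_support_nodup (hadj : ∀ r : Fin n, G.Adj (c r) (c (r+1)))
    (hinj : Function.Injective c) (a : Fin n) (k : ℕ) (hk : k < n) :
    (arcWalk hadj a k).support.Nodup := by
  rw [arcWalk_support]
  refine List.Nodup.map_on ?_ List.nodup_range
  intro i hi j hj hij
  simp only [List.mem_range] at hi hj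
  have := hinj hij
  have : ((i : Fin n) : ℕ) = ((j : Fin n) : ℕ) := by
    have h2 := add_left_cancel this
    rw [h2]
  rwa [Fin.val_natCast, Fin.val_natCast, Nat.mod_eq_of_lt (by omega), Nat.mod_eq_of_lt (by omega)]
    at this

lemma arcWalk_isPath (hadj : ∀ r : Fin n, G.Adj (c r) (c (r+1)))
    (hinj : Function.Injective c) (a : Fin n) (k : ℕ) (hk : k < n) :
    (arcWalk hadj a k).IsPath :=
  Walk.IsPath.mk' (arcWalk_support_nodup hadj hinj a k hk)

lemma arcWalk_support_subset (hadj : ∀ r : Fin n, G.Adj (c r) (c (r+1))) (a : Fin n) (k : ℕ) :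
    ∀ x ∈ (arcWalk hadj a k).support, x ∈ Set.range c := by
  rw [arcWalk_support]
  intro x hx
  simp only [List.mem_map] at hx
  obtain ⟨i, -, rfl⟩ := hx
  exact Set.mem_range_self _

/-- An edge between the two endpoints of a path of length ≥ 2 cannot lie on the path. -/
lemma path_edge_ends {u v : V} (P : G.Walk u v) (hP : P.IsPath) (hlen : 2 ≤ P.length) :
    s(u, v) ∉ P.edges := by
  intro he
  cases P with
  | nil => simp at he
  | @cons _ w _ h q =>
    rw [Walk.edges_cons, List.mem_cons] at he
    have hnodup := hP.support_nodup
    rw [Walk.support_cons, List.nodup_cons] at hnodup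
    rcases he with he | he
    · rw [Sym2.eq_iff] at he
      have hw : w = v ∨ w = u := by tauto
      rcases hw with rfl | rfl
      · have hq : q = Walk.nil := (Walk.isPath_iff_eq_nil (p := q)).mp hP.of_cons
        subst hq; simp at hlen
      · exact hnodup.1 q.start_mem_support
    · exact hnodup.1 (q.fst_mem_support_of_mem_edges he)

end Aux


/-- Let `C` be a longest cycle in a finite graph `G` (given by the
injective cyclic enumeration `c`, with every cycle of `G` having length at most `n`),
and let `P` be a `C`-path with endpoints `u = c s` and `v = c t` where `s < t`. Then each
of the two arcs of `C` between `u` and `v` (having `(t - s) - 1` and `(n - (t - s)) - 1`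
internal vertices respectively) has at least as many internal vertices as `P` has
(namely `P.length - 1`). -/
theorem arcs_of_longest_cycle_long {V : Type*} [Fintype V] (G : SimpleGraph V)
    (n : ℕ) (hn : 3 ≤ n) (c : Fin n → V) (hinj : Function.Injective c)
    (hcyc : ∀ r s : Fin n, ((r : ℕ) + 1) % n = (s : ℕ) → G.Adj (c r) (c s))
    -- `C` is a longest cycle of `G`
    (hlongest : ∀ (a : V) (w : G.Walk a a), w.IsCycle → w.length ≤ n)
    (u v : V) (P : G.Walk u v) (hP : P.IsPath) (hne : 0 < P.length)
    -- `P` is a `C`-path: it meets the cycle exactly in its two endpoints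
    (hPC : {w | w ∈ P.support} ∩ Set.range c = {u, v})
    (s t : Fin n) (hst : (s : ℕ) < t) (hcs : c s = u) (hct : c t = v) :
    P.length - 1 ≤ ((t : ℕ) - (s : ℕ)) - 1 ∧
    P.length - 1 ≤ (n - ((t : ℕ) - (s : ℕ))) - 1 := by
  haveI : NeZero n := ⟨by omega⟩
  have hadj : ∀ r : Fin n, G.Adj (c r) (c (r + 1)) := by
    intro r
    apply hcyc
    rw [Fin.val_add, Fin.val_one', Nat.mod_eq_of_lt (show 1 < n by omega)]
  rcases Nat.lt_or_ge P.length 2 with h1 | hlen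
  · exact ⟨by omega, by omega⟩
  have huv : u ≠ v := by
    intro h
    subst h
    rw [(SimpleGraph.Walk.isPath_iff_eq_nil (p := P)).mp hP] at hne
    simp at hne
  have hmem : ∀ x, x ∈ P.support → x ∈ Set.range c → x = u ∨ x = v := by
    intro x h1 h2
    have : x ∈ ({u, v} : Set V) := hPC ▸ ⟨h1, h2⟩
    simpa using this
  have hunotail : u ∉ P.support.tail := by
    have h := hP.support_nodup
    rw [P.support_eq_cons, List.nodup_cons] at h
    exact h.1
  have key : ∀ (Q : G.Walk v u), Q.IsPath → (∀ x ∈ Q.support, x ∈ Set.range c) →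
      P.length + Q.length ≤ n := by
    intro Q hQ hQc
    have hvnotail : v ∉ Q.support.tail := by
      have h := hQ.support_nodup
      rw [Q.support_eq_cons, List.nodup_cons] at h
      exact h.1
    have hW : (P.append Q).IsCycle := by
      rw [SimpleGraph.Walk.isCycle_def]
      refine ⟨⟨?_⟩, ?_, ?_⟩
      · rw [SimpleGraph.Walk.edges_append, List.nodup_append]
        refine ⟨hP.isTrail.edges_nodup, hQ.isTrail.edges_nodup, ?_⟩
        rintro e heP _ heQ rfl
        induction e with
        | h x y =>
          have hx := P.fst_mem_support_of_mem_edges heP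
          have hy := P.snd_mem_support_of_mem_edges heP
          have hx' := Q.fst_mem_support_of_mem_edges heQ
          have hy' := Q.snd_mem_support_of_mem_edges heQ
          have hadjxy := P.adj_of_mem_edges heP
          rcases hmem x hx (hQc x hx') with rfl | rfl <;>
            rcases hmem y hy (hQc y hy') with rfl | rfl
          · exact hadjxy.ne rfl
          · exact path_edge_ends P hP hlen heP
          · exact path_edge_ends P hP hlen (Sym2.eq_swap ▸ heP)
          · exact hadjxy.ne rfl
      · intro h
        have := congrArg SimpleGraph.Walk.length h
        rw [SimpleGraph.Walk.length_append] at this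
        simp only [SimpleGraph.Walk.length_nil] at this
        omega
      · rw [SimpleGraph.Walk.tail_support_append, List.nodup_append]
        refine ⟨hP.support_nodup.tail, hQ.support_nodup.tail, ?_⟩
        rintro x hxP _ hxQ rfl
        have hx1 : x ∈ P.support := List.mem_of_mem_tail hxP
        have hx2 : x ∈ Q.support := List.mem_of_mem_tail hxQ
        rcases hmem x hx1 (hQc x hx2) with rfl | rfl
        · exact hunotail hxP
        · exact hvnotail hxQ
    have := hlongest u (P.append Q) hW
    rwa [SimpleGraph.Walk.length_append] at this
  have hsn := s.isLt
  have htn := t.isLt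
  set d : ℕ := (t : ℕ) - (s : ℕ) with hd
  have h1 : t + ((n - d : ℕ) : Fin n) = s := by
    apply Fin.ext
    rw [Fin.val_add, Fin.val_natCast, Nat.mod_eq_of_lt (show n - d < n by omega),
      show (t : ℕ) + (n - d) = n + s by omega, Nat.add_mod_left, Nat.mod_eq_of_lt s.isLt]
  have h2 : s + ((d : ℕ) : Fin n) = t := by
    apply Fin.ext
    rw [Fin.val_add, Fin.val_natCast, Nat.mod_eq_of_lt (show d < n by omega),
      show (s : ℕ) + d = t by omega, Nat.mod_eq_of_lt t.isLt]
  -- first bound : use arc from t to s of length n - d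
  have bound1 : P.length ≤ d := by
    have hb := key ((arcWalk hadj t (n - d)).copy hct (by rw [h1, hcs]))
      ((SimpleGraph.Walk.isPath_copy _ _ _).mpr (arcWalk_isPath hadj hinj t (n - d) (by omega)))
      (fun x hx => arcWalk_support_subset hadj t (n - d) x
        (by simpa [SimpleGraph.Walk.support_copy] using hx))
    rw [SimpleGraph.Walk.length_copy, arcWalk_length] at hb
    omega
  have bound2 : P.length ≤ n - d := by
    have hb := key ((arcWalk hadj s d).copy hcs (by rw [h2, hct])).reverse
      (((SimpleGraph.Walk.isPath_copy _ _ _).mpr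
        (arcWalk_isPath hadj hinj s d (by omega))).reverse)
      (fun x hx => arcWalk_support_subset hadj s d x
        (by
          rw [SimpleGraph.Walk.support_reverse, List.mem_reverse,
            SimpleGraph.Walk.support_copy] at hx
          exact hx))
    rw [SimpleGraph.Walk.length_reverse, SimpleGraph.Walk.length_copy, arcWalk_length] at hb
    omega
  exact ⟨by omega, by omega⟩
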